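/- Let q ≥ 2 and define, as elements of the formal power series ring ℚ[[u]], a = -(1-q^3u^6)((q-1)u+q^2(q-1)u^4)/(1-q^4u^6) and for s ≥ 2, a_s = (-q^2(q-1)u^{2s+2}(1-q^3u^6) - q^3(q-1)^2 u^{2s+5})/(1-q^4u^6). Then the limit determinant expression D(u) = (1-q^2(q-1)u^3)(1 + Σ_{s=2}^∞ q^{4s-5}u^{4s-5} a_s) + q^3u^3·a·Σ_{i=1}^∞ q^{2i-2}(q-1)u^{3i-1} equals (1-q^3u^6)(1-q^3u^3)/((1-q^4u^6)(1-q^2u^3)). -/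

import Mathlib

open PowerSeries

/-- Let `q ≥ 2` and set, in `ℚ[[u]]`,
`a = -(1-q³u⁶)((q-1)u + q²(q-1)u⁴)/(1-q⁴u⁶)` and, for `s ≥ 2`,
`aₛ = (-q²(q-1)u^{2s+2}(1-q³u⁶) - q³(q-1)²u^{2s+5})/(1-q⁴u⁶)`.  Then the stabilized
determinant expression
`D(u) = (1-q²(q-1)u³)(1 + Σ_{s=2}^∞ q^{4s-5}u^{4s-5} aₛ) + q³u³·a·Σ_{i=1}^∞ q^{2i-2}(q-1)u^{3i-1}`
equals `(1-q³u⁶)(1-q³u³)/((1-q⁴u⁶)(1-q²u³))`.  The infinite sums are encoded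
coefficientwise (in degree `n` only finitely many terms contribute, since
`q^{4s-5}u^{4s-5}aₛ` has order ≥ `6s-3`). -/
theorem stmt12 (q : ℤ) (hq : 2 ≤ q)
    (a : PowerSeries ℚ)
    (ha : a = -((1 - C ((q : ℚ) ^ 3) * X ^ 6) *
      (C ((q : ℚ) - 1) * X + C ((q : ℚ) ^ 2 * ((q : ℚ) - 1)) * X ^ 4)) *
      (1 - C ((q : ℚ) ^ 4) * X ^ 6)⁻¹)
    (aS : ℕ → PowerSeries ℚ)
    (haS : ∀ s : ℕ, 2 ≤ s → aS s =
      (-(C ((q : ℚ) ^ 2 * ((q : ℚ) - 1)) * X ^ (2 * s + 2) *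
          (1 - C ((q : ℚ) ^ 3) * X ^ 6)) -
        C ((q : ℚ) ^ 3 * ((q : ℚ) - 1) ^ 2) * X ^ (2 * s + 5)) *
      (1 - C ((q : ℚ) ^ 4) * X ^ 6)⁻¹)
    (Sum1 : PowerSeries ℚ)
    (hSum1 : Sum1 = PowerSeries.mk fun n => ∑ s ∈ Finset.Icc 2 (n + 2),
      coeff n (C ((q : ℚ) ^ (4 * s - 5)) * X ^ (4 * s - 5) * aS s))
    (Sum2 : PowerSeries ℚ)
    (hSum2 : Sum2 = PowerSeries.mk fun n =>
      if n % 3 = 2 then (q : ℚ) ^ ((2 * n - 4) / 3) * ((q : ℚ) - 1) else 0) :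
    (1 - C ((q : ℚ) ^ 2 * ((q : ℚ) - 1)) * X ^ 3) * (1 + Sum1) +
      C ((q : ℚ) ^ 3) * X ^ 3 * a * Sum2 =
    ((1 - C ((q : ℚ) ^ 3) * X ^ 6) * (1 - C ((q : ℚ) ^ 3) * X ^ 3)) *
      ((1 - C ((q : ℚ) ^ 4) * X ^ 6) * (1 - C ((q : ℚ) ^ 2) * X ^ 3))⁻¹ := by
  set d : PowerSeries ℚ := 1 - C ((q : ℚ) ^ 4) * X ^ 6 with hd
  set e : PowerSeries ℚ := 1 - C ((q : ℚ) ^ 2) * X ^ 3 with he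
  have hdc : constantCoeff d = 1 := by simp [hd]
  have hec : constantCoeff e = 1 := by simp [he]
  have hdne : constantCoeff d ≠ 0 := by rw [hdc]; norm_num
  have hdeinv : (d * e)⁻¹ * (d * e) = 1 :=
    PowerSeries.inv_mul_cancel _ (by rw [map_mul, hdc, hec]; norm_num)
  -- the terms of Sum1
  set Trm : ℕ → PowerSeries ℚ :=
    fun s => C ((q : ℚ) ^ (4 * s - 5)) * X ^ (4 * s - 5) * aS s with hTrm
  have hS1c : ∀ n, coeff n Sum1 = ∑ s ∈ Finset.Icc 2 (n + 2), coeff n (Trm s) := by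
    intro n; rw [hSum1, coeff_mk]
  have hTc : ∀ s n : ℕ, coeff n (Trm s) =
      if 4 * s - 5 ≤ n then (q : ℚ) ^ (4 * s - 5) * coeff (n - (4 * s - 5)) (aS s)
      else 0 := by
    intro s n
    rw [show Trm s = (C ((q : ℚ) ^ (4 * s - 5)) * aS s) * X ^ (4 * s - 5) from by
        rw [hTrm]; ring, coeff_mul_X_pow']
    split_ifs with h
    · rw [coeff_C_mul]
    · rfl
  have hTz : ∀ s n : ℕ, n < 4 * s - 5 → coeff n (Trm s) = 0 := by
    intro s n h; rw [hTc, if_neg (by omega)]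
  have haSstep : ∀ s : ℕ, 2 ≤ s → aS (s + 1) = X ^ 2 * aS s := by
    intro s hs
    rw [haS s hs, haS (s + 1) (by omega),
      show 2 * (s + 1) + 2 = (2 * s + 2) + 2 from by ring,
      show 2 * (s + 1) + 5 = (2 * s + 5) + 2 from by ring, pow_add, pow_add]
    ring
  have hstep : ∀ s : ℕ, 2 ≤ s → Trm (s + 1) = (C ((q : ℚ) ^ 4) * X ^ 6) * Trm s := by
    intro s hs
    rw [hTrm]
    simp only
    rw [haSstep s hs, show 4 * (s + 1) - 5 = (4 * s - 5) + 4 from by omega,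
      pow_add, pow_add, map_mul]
    ring
  -- functional equation for Sum1
  have hFE : Sum1 = Trm 2 + (C ((q : ℚ) ^ 4) * X ^ 6) * Sum1 := by
    ext n
    rw [map_add, show (C ((q : ℚ) ^ 4) * X ^ 6) * Sum1
        = (C ((q : ℚ) ^ 4) * Sum1) * X ^ 6 from by ring, coeff_mul_X_pow']
    by_cases h6 : 6 ≤ n
    · rw [if_pos h6, coeff_C_mul, hS1c, hS1c]
      have hcs : ∀ s : ℕ, 2 ≤ s →
          (q : ℚ) ^ 4 * coeff (n - 6) (Trm s) = coeff n (Trm (s + 1)) := by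
        intro s hs
        rw [hstep s hs, show C ((q : ℚ) ^ 4) * X ^ 6 * Trm s
            = (C ((q : ℚ) ^ 4) * Trm s) * X ^ 6 from by ring,
          coeff_mul_X_pow', if_pos h6, coeff_C_mul]
      rw [Finset.mul_sum]
      have h1 : ∑ s ∈ Finset.Icc 2 (n - 6 + 2), (q : ℚ) ^ 4 * coeff (n - 6) (Trm s)
          = ∑ s ∈ Finset.Icc 2 (n - 4), coeff n (Trm (s + 1)) := by
        rw [show n - 6 + 2 = n - 4 from by omega]
        exact Finset.sum_congr rfl fun s hs =>
          hcs s (Finset.mem_Icc.mp hs).1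
      rw [h1]
      have h2 : ∑ s ∈ Finset.Icc 2 (n - 4), coeff n (Trm (s + 1))
          = ∑ t ∈ Finset.Icc 3 (n - 3), coeff n (Trm t) := by
        rw [show Finset.Icc 3 (n - 3)
            = (Finset.Icc 2 (n - 4)).map (addRightEmbedding 1) from by
          rw [Finset.map_add_right_Icc]; congr 1 <;> omega, Finset.sum_map]
        rfl
      rw [h2]
      have h3 : ∑ t ∈ Finset.Icc 3 (n - 3), coeff n (Trm t)
          = ∑ t ∈ Finset.Icc 3 (n + 2), coeff n (Trm t) := by
        apply Finset.sum_subset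
        · intro x hx
          simp only [Finset.mem_Icc] at hx ⊢
          omega
        · intro x hx hx2
          simp only [Finset.mem_Icc] at hx hx2
          exact hTz x n (by omega)
      rw [h3, show Finset.Icc 2 (n + 2) = insert 2 (Finset.Icc 3 (n + 2)) from by
          ext x; simp only [Finset.mem_insert, Finset.mem_Icc]; omega,
        Finset.sum_insert (by simp)]
    · rw [if_neg h6, add_zero, hS1c]
      exact Finset.sum_eq_single_of_mem 2 (by simp)
        (fun b hb hbne => hTz b n
          (by simp only [Finset.mem_Icc] at hb; omega))
  have hS1d : Sum1 * d = Trm 2 := by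
    have h : Sum1 - (C ((q : ℚ) ^ 4) * X ^ 6) * Sum1 = Trm 2 := by
      nth_rewrite 1 [hFE]; ring
    rw [hd, ← h]; ring
  have hid : d⁻¹ * d = 1 := PowerSeries.inv_mul_cancel d hdne
  have hB : Sum1 * d * d = C ((q : ℚ) ^ 3) * X ^ 3 *
      (-(C ((q : ℚ) ^ 2 * ((q : ℚ) - 1)) * X ^ 6 * (1 - C ((q : ℚ) ^ 3) * X ^ 6)) -
        C ((q : ℚ) ^ 3 * ((q : ℚ) - 1) ^ 2) * X ^ 9) := by
    rw [hS1d, hTrm]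
    simp only [show (4 : ℕ) * 2 - 5 = 3 from rfl, show (2 : ℕ) * 2 + 2 = 6 from rfl,
      show (2 : ℕ) * 2 + 5 = 9 from rfl, haS 2 (le_refl 2)]
    linear_combination (C ((q : ℚ) ^ 3) * X ^ 3 *
      (-(C ((q : ℚ) ^ 2 * ((q : ℚ) - 1)) * X ^ 6 * (1 - C ((q : ℚ) ^ 3) * X ^ 6)) -
        C ((q : ℚ) ^ 3 * ((q : ℚ) - 1) ^ 2) * X ^ 9)) * hid
  have hA : a * d = -((1 - C ((q : ℚ) ^ 3) * X ^ 6) *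
      (C ((q : ℚ) - 1) * X + C ((q : ℚ) ^ 2 * ((q : ℚ) - 1)) * X ^ 4)) := by
    rw [ha, mul_assoc, hid, mul_one]
  have hC : Sum2 * e = C ((q : ℚ) - 1) * X ^ 2 := by
    have h : Sum2 * e = Sum2 - (C ((q : ℚ) ^ 2) * Sum2) * X ^ 3 := by
      rw [he]; ring
    rw [h]
    ext n
    rw [map_sub, coeff_mul_X_pow', hSum2]
    simp only [coeff_C_mul, coeff_mk, coeff_X_pow]
    by_cases h3 : 3 ≤ n
    · rw [if_pos h3]
      have hmod : (n - 3) % 3 = n % 3 := by omega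
      rw [hmod]
      by_cases hm : n % 3 = 2
      · rw [if_pos hm, if_pos hm, if_neg (show ¬ n = 2 from by omega)]
        have hdiv : (2 * n - 4) / 3 = 2 + (2 * (n - 3) - 4) / 3 := by omega
        rw [hdiv, pow_add]
        ring
      · rw [if_neg hm, if_neg hm, if_neg (show ¬ n = 2 from by omega)]
        ring
    · rw [if_neg h3, sub_zero]
      interval_cases n <;> norm_num
  -- now cancel the unit d * d * e
  have hcde : constantCoeff (d * d * e) = 1 := by
    rw [map_mul, map_mul, hdc, hec]; norm_num
  have hne : d * d * e ≠ 0 := by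
    intro h0
    rw [h0, map_zero] at hcde
    exact one_ne_zero hcde.symm
  apply mul_right_cancel₀ hne
  simp only [hd, he] at hA hB hC hdeinv ⊢
  simp only [map_mul, map_pow, map_sub, map_one] at hA hB hC hdeinv ⊢
  linear_combination
    ((1 - (C (q : ℚ)) ^ 2 * (C (q : ℚ) - 1) * X ^ 3) *
      (1 - (C (q : ℚ)) ^ 2 * X ^ 3)) * hB
    + ((C (q : ℚ)) ^ 3 * X ^ 3 * Sum2 * (1 - (C (q : ℚ)) ^ 4 * X ^ 6) *
      (1 - (C (q : ℚ)) ^ 2 * X ^ 3)) * hA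
    + (-((C (q : ℚ)) ^ 3 * X ^ 3 *
        ((1 - (C (q : ℚ)) ^ 3 * X ^ 6) *
          ((C (q : ℚ) - 1) * X + (C (q : ℚ)) ^ 2 * (C (q : ℚ) - 1) * X ^ 4)) *
        (1 - (C (q : ℚ)) ^ 4 * X ^ 6))) * hC
    + (-((1 - (C (q : ℚ)) ^ 3 * X ^ 6) * (1 - (C (q : ℚ)) ^ 3 * X ^ 3) *
        (1 - (C (q : ℚ)) ^ 4 * X ^ 6))) * hdeinv
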